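/- Under the MAR assumption, the variance of the mean-score single-observation term M = V·D + (1 − V)·ρ equals Var(M) = θ(1 − θ) − E[ (1 − π) · ρ(1 − ρ) ], where θ = ℙ(D = 1). -/

import Mathlib

open MeasureTheory ProbabilityTheory

/-- Under MAR, the variance of the mean-score single-observation term
`M = V·D + (1 − V)·ρ` equals `Var(M) = θ(1 − θ) − E[(1 − π) · ρ(1 − ρ)]`, where
`θ = ℙ(D = 1)`. -/
theorem mar_variance_mean_score_theta
    {Ω : Type*} [mΩ : MeasurableSpace Ω] [StandardBorelSpace Ω] [Nonempty Ω]
    (μ : Measure Ω) [IsProbabilityMeasure μ] {d : ℕ}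
    (T : Ω → ℝ) (A : Ω → (Fin d → ℝ)) (D V : Ω → ℝ)
    (hT : Measurable T) (hA : Measurable A) (hD : Measurable D) (hV : Measurable V)
    (hDval : ∀ ω, D ω = 0 ∨ D ω = 1) (hVval : ∀ ω, V ω = 0 ∨ V ω = 1)
    (𝒢 : MeasurableSpace Ω)
    (h𝒢 : 𝒢 = MeasurableSpace.comap (fun ω => (T ω, A ω)) inferInstance)
    (h𝒢le : 𝒢 ≤ mΩ)
    (MAR : CondIndepFun (mΩ := mΩ) 𝒢 h𝒢le V D μ) :
    variance (fun ω => V ω * D ω + (1 - V ω) * (μ[D | 𝒢]) ω) μ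
      = (μ {ω | D ω = 1}).toReal * (1 - (μ {ω | D ω = 1}).toReal)
        - ∫ ω, (1 - (μ[V | 𝒢]) ω) * ((μ[D | 𝒢]) ω * (1 - (μ[D | 𝒢]) ω)) ∂μ := by
  set ρ : Ω → ℝ := μ[D | 𝒢] with hρdef
  set π : Ω → ℝ := μ[V | 𝒢] with hπdef
  -- basic integrability
  have hD01 : ∀ ω, ‖D ω‖ ≤ 1 := fun ω => by rcases hDval ω with h | h <;> simp [h]
  have hV01 : ∀ ω, ‖V ω‖ ≤ 1 := fun ω => by rcases hVval ω with h | h <;> simp [h]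
  have hint : ∀ f : Ω → ℝ, AEStronglyMeasurable[mΩ] f μ → (∀ᵐ ω ∂μ, ‖f ω‖ ≤ 1) →
      Integrable f μ := fun f hf hb =>
    memLp_one_iff_integrable.mp (MemLp.of_bound hf 1 hb)
  have hDint : Integrable D μ := hint D hD.aestronglyMeasurable (ae_of_all _ hD01)
  have hVint : Integrable V μ := hint V hV.aestronglyMeasurable (ae_of_all _ hV01)
  -- measurability and bounds of the conditional expectations
  have hρsm : StronglyMeasurable[𝒢] ρ := stronglyMeasurable_condExp
  have hπsm : StronglyMeasurable[𝒢] π := stronglyMeasurable_condExp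
  have hρm : AEStronglyMeasurable[mΩ] ρ μ := (hρsm.mono h𝒢le).aestronglyMeasurable
  have hπm : AEStronglyMeasurable[mΩ] π μ := (hπsm.mono h𝒢le).aestronglyMeasurable
  have hbnd : ∀ (f : Ω → ℝ), (∀ ω, f ω = 0 ∨ f ω = 1) → Integrable f μ →
      ∀ᵐ ω ∂μ, ‖(μ[f | 𝒢]) ω‖ ≤ 1 := by
    intro f hfval hfint
    have h0 : (0 : Ω → ℝ) ≤ᵐ[μ] μ[f | 𝒢] :=
      condExp_nonneg (ae_of_all _ fun ω => by rcases hfval ω with h | h <;> simp [h])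
    have h1 : μ[f | 𝒢] ≤ᵐ[μ] μ[(fun _ => (1:ℝ)) | 𝒢] :=
      condExp_mono hfint (integrable_const 1)
        (ae_of_all _ fun ω => by rcases hfval ω with h | h <;> simp [h])
    rw [condExp_const h𝒢le] at h1
    filter_upwards [h0, h1] with ω e0 e1
    rw [Real.norm_eq_abs, abs_le]
    have e0' : (0:ℝ) ≤ (μ[f|𝒢]) ω := e0
    exact ⟨by linarith, e1⟩
  have hρb : ∀ᵐ ω ∂μ, ‖ρ ω‖ ≤ 1 := hbnd D hDval hDint
  have hπb : ∀ᵐ ω ∂μ, ‖π ω‖ ≤ 1 := hbnd V hVval hVint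
  have hmul : ∀ f g : Ω → ℝ, AEStronglyMeasurable[mΩ] f μ → AEStronglyMeasurable[mΩ] g μ →
      (∀ᵐ ω ∂μ, ‖f ω‖ ≤ 1) → (∀ᵐ ω ∂μ, ‖g ω‖ ≤ 1) →
      Integrable (fun ω => f ω * g ω) μ := by
    intro f g hf hg hbf hbg
    refine hint _ (hf.mul hg) ?_
    filter_upwards [hbf, hbg] with ω e1 e2
    calc ‖f ω * g ω‖ = ‖f ω‖ * ‖g ω‖ := norm_mul _ _
      _ ≤ 1 * 1 := by gcongr
      _ = 1 := one_mul 1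
  have hρint : Integrable ρ μ := integrable_condExp
  have hρρ : Integrable (fun ω => ρ ω * ρ ω) μ := hmul ρ ρ hρm hρm hρb hρb
  have hVD : Integrable (fun ω => V ω * D ω) μ :=
    hmul V D hV.aestronglyMeasurable hD.aestronglyMeasurable (ae_of_all _ hV01)
      (ae_of_all _ hD01)
  have hρV : Integrable (fun ω => ρ ω * V ω) μ :=
    hmul ρ V hρm hV.aestronglyMeasurable hρb (ae_of_all _ hV01)
  have hρρV : Integrable (fun ω => ρ ω * ρ ω * V ω) μ := by
    refine hmul _ V (hρm.mul hρm) hV.aestronglyMeasurable ?_ (ae_of_all _ hV01)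
    filter_upwards [hρb] with ω e
    calc ‖ρ ω * ρ ω‖ = ‖ρ ω‖ * ‖ρ ω‖ := norm_mul _ _
      _ ≤ 1 * 1 := by gcongr
      _ = 1 := one_mul 1
  have hπρ : Integrable (fun ω => π ω * ρ ω) μ := hmul π ρ hπm hρm hπb hρb
  have hπρρ : Integrable (fun ω => π ω * (ρ ω * ρ ω)) μ := by
    refine hmul π _ hπm (hρm.mul hρm) hπb ?_
    filter_upwards [hρb] with ω e
    calc ‖ρ ω * ρ ω‖ = ‖ρ ω‖ * ‖ρ ω‖ := norm_mul _ _
      _ ≤ 1 * 1 := by gcongr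
      _ = 1 := one_mul 1
  -- key consequence of MAR : E[VD|𝒢] = π ρ a.e.
  have key : μ[(fun ω => V ω * D ω) | 𝒢] =ᵐ[μ] fun ω => π ω * ρ ω := by
    have h := (condIndepFun_iff_condExp_inter_preimage_eq_mul hV hD).mp MAR
      {1} {1} (measurableSet_singleton 1) (measurableSet_singleton 1)
    have e1 : Set.indicator (V ⁻¹' {1} ∩ D ⁻¹' {1}) (fun _ => (1:ℝ))
        = fun ω => V ω * D ω := by
      funext ω
      rcases hVval ω with h1 | h1 <;> rcases hDval ω with h2 | h2 <;>
        simp [Set.indicator_apply, h1, h2]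
    have e2 : Set.indicator (V ⁻¹' {1}) (fun _ => (1:ℝ)) = V := by
      funext ω; rcases hVval ω with h1 | h1 <;> simp [Set.indicator_apply, h1]
    have e3 : Set.indicator (D ⁻¹' {1}) (fun _ => (1:ℝ)) = D := by
      funext ω; rcases hDval ω with h1 | h1 <;> simp [Set.indicator_apply, h1]
    rw [e1, e2, e3] at h
    exact h
  -- pull-out lemmas
  have pullV : μ[(fun ω => ρ ω * V ω) | 𝒢] =ᵐ[μ] fun ω => ρ ω * π ω :=
    condExp_mul_of_stronglyMeasurable_left hρsm hρV hVint
  have pullV2 : μ[(fun ω => ρ ω * ρ ω * V ω) | 𝒢] =ᵐ[μ] fun ω => ρ ω * ρ ω * π ω :=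
    condExp_mul_of_stronglyMeasurable_left (hρsm.mul hρsm) hρρV hVint
  -- integral identities
  have iVD : ∫ ω, V ω * D ω ∂μ = ∫ ω, π ω * ρ ω ∂μ := by
    rw [← integral_condExp h𝒢le]
    exact integral_congr_ae key
  have iρV : ∫ ω, ρ ω * V ω ∂μ = ∫ ω, ρ ω * π ω ∂μ := by
    rw [← integral_condExp h𝒢le]
    exact integral_congr_ae pullV
  have iρρV : ∫ ω, ρ ω * ρ ω * V ω ∂μ = ∫ ω, ρ ω * ρ ω * π ω ∂μ := by
    rw [← integral_condExp h𝒢le]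
    exact integral_congr_ae pullV2
  have iρ : ∫ ω, ρ ω ∂μ = ∫ ω, D ω ∂μ := integral_condExp h𝒢le
  -- θ
  set θ : ℝ := (μ {ω | D ω = 1}).toReal with hθdef
  have hθ : ∫ ω, D ω ∂μ = θ := by
    have hs : MeasurableSet[mΩ] (D ⁻¹' {1}) := hD (measurableSet_singleton 1)
    have hset : {ω | D ω = 1} = D ⁻¹' {1} := rfl
    have hDeq : D = Set.indicator (D ⁻¹' {1}) (fun _ => (1:ℝ)) := by
      funext ω
      rcases hDval ω with h1 | h1 <;> simp [Set.indicator_apply, h1]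
    have hic := @integral_indicator_const Ω ℝ mΩ _ _ μ _ (1:ℝ) _ hs
    calc ∫ ω, D ω ∂μ = ∫ ω, (D ⁻¹' {1}).indicator (fun _ => (1:ℝ)) ω ∂μ :=
        integral_congr_ae (ae_of_all _ fun ω => congrFun hDeq ω)
      _ = (μ (D ⁻¹' {1})).toReal • 1 := hic
      _ = θ := by rw [hθdef, hset]; simp
  -- the variance formula
  set M : Ω → ℝ := fun ω => V ω * D ω + (1 - V ω) * ρ ω with hMdef
  have hMm : AEStronglyMeasurable[mΩ] M μ :=
    (hV.aestronglyMeasurable.mul hD.aestronglyMeasurable).add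
      ((aestronglyMeasurable_const.sub hV.aestronglyMeasurable).mul hρm)
  have hM2 : MemLp M 2 μ := by
    refine MemLp.of_bound hMm 1 ?_
    filter_upwards [hρb] with ω e
    rcases hVval ω with h1 | h1
    · simpa [M, h1] using e
    · simpa [M, h1] using hD01 ω
  have hMint : Integrable M μ := by
    refine hint M hMm ?_
    filter_upwards [hρb] with ω e
    rcases hVval ω with h1 | h1
    · simpa [M, h1] using e
    · simpa [M, h1] using hD01 ω
  have hMsq : (fun ω => (M ω)^2) = fun ω => V ω * D ω + (ρ ω * ρ ω - ρ ω * ρ ω * V ω) := by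
    funext ω
    rcases hVval ω with h1 | h1 <;> rcases hDval ω with h2 | h2 <;>
      simp [M, h1, h2] <;> ring
  -- mean of M
  have hEM : ∫ ω, M ω ∂μ = ∫ ω, D ω ∂μ := by
    have hMeq : M = fun ω => V ω * D ω + (ρ ω - ρ ω * V ω) := by
      funext ω; simp [M]; ring
    have hsub1 : Integrable (fun ω => ρ ω - ρ ω * V ω) μ := hρint.sub hρV
    rw [hMeq, integral_add hVD hsub1, integral_sub hρint hρV, iVD, iρV, iρ]
    have : ∫ ω, π ω * ρ ω ∂μ = ∫ ω, ρ ω * π ω ∂μ := by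
      congr 1; funext ω; ring
    rw [this]; ring
  -- second moment of M
  have hEM2 : ∫ ω, (M ω)^2 ∂μ
      = ∫ ω, π ω * ρ ω ∂μ + (∫ ω, ρ ω * ρ ω ∂μ - ∫ ω, ρ ω * ρ ω * π ω ∂μ) := by
    have hsub2 : Integrable (fun ω => ρ ω * ρ ω - ρ ω * ρ ω * V ω) μ := hρρ.sub hρρV
    rw [hMsq, integral_add hVD hsub2, integral_sub hρρ hρρV, iVD, iρρV]
  -- the subtracted term on the right-hand side
  have hRHS : ∫ ω, (1 - π ω) * (ρ ω * (1 - ρ ω)) ∂μ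
      = (∫ ω, ρ ω ∂μ - ∫ ω, ρ ω * ρ ω ∂μ) - (∫ ω, ρ ω * π ω ∂μ - ∫ ω, ρ ω * ρ ω * π ω ∂μ) := by
    have e : (fun ω => (1 - π ω) * (ρ ω * (1 - ρ ω)))
        = fun ω => (ρ ω - ρ ω * ρ ω) - (ρ ω * π ω - ρ ω * ρ ω * π ω) := by
      funext ω; ring
    have hρπ : Integrable (fun ω => ρ ω * π ω) μ := hmul ρ π hρm hπm hρb hπb
    have hρρπ : Integrable (fun ω => ρ ω * ρ ω * π ω) μ := by
      refine hmul _ π (hρm.mul hρm) hπm ?_ hπb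
      filter_upwards [hρb] with ω e
      calc ‖ρ ω * ρ ω‖ = ‖ρ ω‖ * ‖ρ ω‖ := norm_mul _ _
        _ ≤ 1 * 1 := by gcongr
        _ = 1 := one_mul 1
    have hsubA : Integrable (fun ω => ρ ω - ρ ω * ρ ω) μ := hρint.sub hρρ
    have hsubB : Integrable (fun ω => ρ ω * π ω - ρ ω * ρ ω * π ω) μ := hρπ.sub hρρπ
    rw [e, integral_sub hsubA hsubB, integral_sub hρint hρρ, integral_sub hρπ hρρπ]
  -- put everything together
  rw [variance_eq_sub hM2]
  simp only [Pi.pow_apply]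
  rw [hEM2, hEM, hθ, hRHS, iρ, hθ]
  have c1 : ∫ ω, π ω * ρ ω ∂μ = ∫ ω, ρ ω * π ω ∂μ := by
    congr 1; funext ω; ring
  have c2 : ∫ ω, ρ ω * ρ ω * π ω ∂μ = ∫ ω, ρ ω * ρ ω * π ω ∂μ := rfl
  rw [c1]
  ring
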